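/- Let k be a positive integer, and let G₁ and G₂ be chordal graphs on a common vertex set such that G₁ has a representation (T₁,β₁) with rad(T₁) ≤ k. If G = G₁ ∩ G₂, then χ(G) ≤ (k+1) · ω(G). (This is the corrected form of the paper's bound χ(G) ≤ k·ω(G), accounting for the k+1 possible levels 0,1,…,k of subtrees in a tree of radius at most k.) -/

import Mathlib

open SimpleGraph

/-- A graph is chordal if it contains no hole, i.e. no induced cycle of length at least four. -/
def Chordal {V : Type} (G : SimpleGraph V) : Prop :=
  ∀ n : ℕ, 4 ≤ n → IsEmpty (SimpleGraph.cycleGraph n ↪g G)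

/-- `(T, β)` is a tree-decomposition of `G`. -/
structure IsTreeDecomp {V B : Type} (G : SimpleGraph V) (T : SimpleGraph B) (β : B → Set V) :
    Prop where
  isTree : T.IsTree
  exists_bag : ∀ v : V, ∃ t, v ∈ β t
  adj_bag : ∀ ⦃u v : V⦄, G.Adj u v → ∃ t, u ∈ β t ∧ v ∈ β t
  support_connected : ∀ v : V, (T.induce {t | v ∈ β t}).Connected

/-- The chordality of `G`. -/
noncomputable def chor {V : Type} [Fintype V] (G : SimpleGraph V) : ℕ :=
  sInf {k | 0 < k ∧ ∃ H : Fin k → SimpleGraph V, (∀ i, Chordal (H i)) ∧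
    ∀ u v : V, G.Adj u v ↔ ∀ i, (H i).Adj u v}

/-- The Cartesian (box) product of a family of graphs. -/
def boxProdPi {ι : Type} {B : ι → Type} (T : ∀ i, SimpleGraph (B i)) :
    SimpleGraph (∀ i, B i) where
  Adj x y := ∃ i, (T i).Adj (x i) (y i) ∧ ∀ j, j ≠ i → x j = y j
  symm := by
    constructor
    rintro x y ⟨i, h, hj⟩
    exact ⟨i, h.symm, fun j hji => (hj j hji).symm⟩
  loopless := by
    constructor
    rintro x ⟨i, h, -⟩
    exact (T i).loopless.irrefl _ h

/-- The geodesic interval `I(u,v)` of a graph. -/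
def geoInterval {V : Type} (G : SimpleGraph V) (u v : V) : Set V :=
  {x | G.dist u v = G.dist u x + G.dist x v}

/-- A set of vertices is (geodesically) convex. -/
def GeoConvex {V : Type} (G : SimpleGraph V) (S : Set V) : Prop :=
  ∀ u ∈ S, ∀ v ∈ S, geoInterval G u v ⊆ S

/-- A median graph. -/
def MedianGraph {V : Type} (M : SimpleGraph V) : Prop :=
  M.Connected ∧ ∀ u v w : V,
    ∃! x, x ∈ geoInterval M u v ∩ geoInterval M u w ∩ geoInterval M v w

/-- `φ` is an isometric embedding of `G` into `H`. -/
def IsIsometricEmbedding {V W : Type} (G : SimpleGraph V) (H : SimpleGraph W)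
    (φ : V → W) : Prop :=
  ∀ u v : V, H.dist (φ u) (φ v) = G.dist u v

/-- `M` has tree-dimension at most `k`. -/
def TreeDimLE {V : Type} (M : SimpleGraph V) (k : ℕ) : Prop :=
  ∃ (B : Fin k → Type) (_ : ∀ i, Fintype (B i)) (T : ∀ i, SimpleGraph (B i)),
    (∀ i, (T i).IsTree) ∧
    ∃ φ : V → (∀ i, B i), IsIsometricEmbedding M (boxProdPi T) φ

/-- `G` has a complete `k`-tree-median-decomposition. -/
def HasCompleteTMD {V : Type} (G : SimpleGraph V) (k : ℕ) : Prop :=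
  ∃ (X : Type) (_ : Fintype X) (M : SimpleGraph X) (γ : X → Set V),
    MedianGraph M ∧ TreeDimLE M k ∧
    (∀ v : V, ({x : X | v ∈ γ x}).Nonempty ∧ GeoConvex M {x : X | v ∈ γ x}) ∧
    (∀ ⦃u v : V⦄, G.Adj u v → ({x : X | u ∈ γ x} ∩ {x : X | v ∈ γ x}).Nonempty) ∧
    (∀ x : X, G.IsClique (γ x))

/-- The tree-median-dimension of `G`. -/
noncomputable def tmd {V : Type} [Fintype V] (G : SimpleGraph V) : ℕ :=
  sInf {k | 0 < k ∧ HasCompleteTMD G k}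

/-- `T` is a path graph. -/
def IsPathGraph {B : Type} (T : SimpleGraph B) : Prop :=
  ∃ n : ℕ, Nonempty (T ≃g SimpleGraph.pathGraph n)

/-- A graph is an interval graph if it can be represented by nonempty closed
intervals of the real line. -/
def IntervalGraph {V : Type} (G : SimpleGraph V) : Prop :=
  ∃ I : V → Set ℝ, (∀ v, ∃ a b : ℝ, a ≤ b ∧ I v = Set.Icc a b) ∧
    ∀ u v : V, u ≠ v → (G.Adj u v ↔ (I u ∩ I v).Nonempty)

/-- `(T, β)` is a representation of the chordal graph `H`. -/
structure IsRepresentation {V B : Type} (H : SimpleGraph V) (T : SimpleGraph B)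
    (β : B → Set V) : Prop where
  isTree : T.IsTree
  support_connected : ∀ v : V, (T.induce {t | v ∈ β t}).Connected
  adj_iff : ∀ u v : V, u ≠ v →
    (H.Adj u v ↔ ({t : B | u ∈ β t} ∩ {t : B | v ∈ β t}).Nonempty)

/-- `G` has path-width at most `k`. -/
def PathwidthLE {V : Type} (G : SimpleGraph V) (k : ℕ) : Prop :=
  ∃ (B : Type) (_ : Fintype B) (P : SimpleGraph B) (β : B → Set V),
    IsPathGraph P ∧ IsTreeDecomp G P β ∧ ∀ t : B, (β t).ncard ≤ k + 1

/-- The radius of `T` is at most `k`. -/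
def RadiusLE {B : Type} (T : SimpleGraph B) (k : ℕ) : Prop :=
  ∃ r : B, ∀ t : B, T.dist r t ≤ k

/-- The lexicographic product of two graphs. -/
def lexProd {V W : Type} (G : SimpleGraph V) (H : SimpleGraph W) :
    SimpleGraph (V × W) where
  Adj x y := G.Adj x.1 y.1 ∨ (x.1 = y.1 ∧ H.Adj x.2 y.2)
  symm := by
    constructor
    rintro x y (h | ⟨h1, h2⟩)
    · exact Or.inl h.symm
    · exact Or.inr ⟨h1.symm, h2.symm⟩
  loopless := by
    constructor
    rintro x (h | ⟨-, h⟩) <;> exact SimpleGraph.irrefl _ h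


namespace SimpleGraph.Walk

variable {V : Type} {G : SimpleGraph V}

/-- Take the first `n` steps of a walk. -/
def takeN {u v : V} : (p : G.Walk u v) → (n : ℕ) → G.Walk u (p.getVert n)
  | p, 0 => Walk.nil.copy rfl (p.getVert_zero).symm
  | Walk.cons h q, (n+1) => Walk.cons h (takeN q n)
  | Walk.nil, (n+1) => Walk.nil.copy rfl (by simp [Walk.getVert])

lemma takeN_spec {u v : V} (p : G.Walk u v) (n : ℕ) :
    (p.takeN n).append (p.drop n) = p := by
  induction p generalizing n with
  | nil => cases n <;> simp [takeN, drop]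
  | cons h q ih =>
    cases n with
    | zero => simp [takeN, drop]
    | succ n => simp [takeN, drop, ih]

lemma length_takeN {u v : V} (p : G.Walk u v) (n : ℕ) (hn : n ≤ p.length) :
    (p.takeN n).length = n := by
  induction p generalizing n with
  | nil => simp at hn; subst hn; simp [takeN]
  | cons h q ih =>
    cases n with
    | zero => simp [takeN]
    | succ n => show (q.takeN n).length + 1 = n + 1; rw [ih n (by simpa using hn)]

lemma getVert_takeN {u v : V} (p : G.Walk u v) (n i : ℕ) (hi : i ≤ n) :
    (p.takeN n).getVert i = p.getVert i := by
  induction p generalizing n i with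
  | nil => cases n <;> simp [takeN, getVert_copy]
  | cons h q ih =>
    cases n with
    | zero => interval_cases i; simp [takeN]
    | succ n =>
      cases i with
      | zero => simp [takeN]
      | succ i => simp only [takeN, getVert_cons_succ]; exact ih n i (by omega)

lemma length_dropN {u v : V} (p : G.Walk u v) (n : ℕ) (hn : n ≤ p.length) :
    (p.drop n).length = p.length - n := by
  have := congrArg Walk.length (p.takeN_spec n)
  rw [length_append, length_takeN p n hn] at this
  omega

lemma mem_support_takeN {u v z : V} (p : G.Walk u v) (n : ℕ) (hz : z ∈ (p.takeN n).support) :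
    z ∈ p.support := by
  have h := congrArg (fun w => z ∈ Walk.support w) (p.takeN_spec n)
  simp only [eq_iff_iff] at h
  rw [← h, mem_support_append_iff]; exact Or.inl hz

lemma mem_support_dropN {u v z : V} (p : G.Walk u v) (n : ℕ) (hz : z ∈ (p.drop n).support) :
    z ∈ p.support := by
  have h := congrArg (fun w => z ∈ Walk.support w) (p.takeN_spec n)
  simp only [eq_iff_iff] at h
  rw [← h, mem_support_append_iff]; exact Or.inr hz

/-- getVert is injective on paths. -/
lemma IsPath.getVert_injective {u v : V} {p : G.Walk u v} (hp : p.IsPath) :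
    ∀ i j, i < j → j ≤ p.length → p.getVert i ≠ p.getVert j := by
  induction p with
  | nil => intro i j hij hj; simp at hj; omega
  | cons h q ih =>
    intro i j hij hj
    rw [cons_isPath_iff] at hp
    cases i with
    | zero =>
      simp only [getVert_zero, getVert_cons_succ]
      obtain ⟨j, rfl⟩ : ∃ j', j = j' + 1 := ⟨j - 1, by omega⟩
      simp only [getVert_cons_succ]
      intro heq
      exact hp.2 (mem_support_iff_exists_getVert.mpr ⟨j, heq.symm, by simpa using hj⟩)
    | succ i =>
      obtain ⟨j, rfl⟩ : ∃ j', j = j' + 1 := ⟨j - 1, by omega⟩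
      simp only [getVert_cons_succ]
      exact ih hp.1 i j (by omega) (by simpa using hj)

lemma mem_support_iff_getVert_takeN {u v z : V} (p : G.Walk u v) (n : ℕ) (hn : n ≤ p.length) :
    z ∈ (p.takeN n).support ↔ ∃ i, i ≤ n ∧ p.getVert i = z := by
  rw [mem_support_iff_exists_getVert]
  constructor
  · rintro ⟨i, hi, hile⟩
    rw [length_takeN p n hn] at hile
    exact ⟨i, hile, by rwa [getVert_takeN p n i hile] at hi⟩
  · rintro ⟨i, hile, hi⟩
    exact ⟨i, by rwa [getVert_takeN p n i hile], by rwa [length_takeN p n hn]⟩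

end SimpleGraph.Walk

section TreeLemmas

variable {B : Type} {T : SimpleGraph B}

lemma tree_path_length (hT : T.IsTree) {u v : B} (p : T.Walk u v) (hp : p.IsPath) :
    p.length = T.dist u v := by
  obtain ⟨q, hq, hlen⟩ := (hT.isConnected u v).exists_path_of_dist
  rw [(hT.existsUnique_path u v).unique hp hq, hlen]

lemma tree_adj_dist (hT : T.IsTree) (r : B) {y z : B} (h : T.Adj y z) :
    T.dist r z = T.dist r y + 1 ∨ T.dist r y = T.dist r z + 1 := by
  classical
  obtain ⟨p, hp, hlen⟩ := (hT.isConnected r y).exists_path_of_dist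
  by_cases hz : z ∈ p.support
  · right
    have h1 := tree_path_length hT (p.takeUntil z hz) (hp.takeUntil hz)
    have h2 := tree_path_length hT (p.dropUntil z hz) (hp.dropUntil hz)
    have h3 := congrArg SimpleGraph.Walk.length (p.take_spec hz)
    rw [SimpleGraph.Walk.length_append] at h3
    have h4 : T.dist z y = 1 := SimpleGraph.dist_eq_one_iff_adj.mpr h.symm
    omega
  · left
    have hq : (p.append (SimpleGraph.Walk.cons h SimpleGraph.Walk.nil)).IsPath := by
      rw [SimpleGraph.Walk.isPath_def, SimpleGraph.Walk.support_append]
      simp only [SimpleGraph.Walk.support_cons, SimpleGraph.Walk.support_nil, List.tail_cons]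
      rw [List.nodup_append]
      refine ⟨hp.support_nodup, List.nodup_singleton _, ?_⟩
      intro a ha b hb hab
      rw [List.mem_singleton] at hb
      exact hz (by rw [← hb, ← hab]; exact ha)
    have := tree_path_length hT _ hq
    rw [SimpleGraph.Walk.length_append] at this
    simp only [SimpleGraph.Walk.length_cons, SimpleGraph.Walk.length_nil] at this
    omega

/-- In a tree, two vertices at the same distance from `r` on a common geodesic to `x` are equal. -/
lemma tree_unique_mid (hT : T.IsTree) (r x : B) {m m' : B}
    (h1 : T.dist r m = T.dist r m') (h2 : T.dist r x = T.dist r m + T.dist m x)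
    (h3 : T.dist r x = T.dist r m' + T.dist m' x) : m = m' := by
  obtain ⟨p1, hp1, hl1⟩ := (hT.isConnected r m).exists_path_of_dist
  obtain ⟨q1, hq1, hk1⟩ := (hT.isConnected m x).exists_path_of_dist
  obtain ⟨p2, hp2, hl2⟩ := (hT.isConnected r m').exists_path_of_dist
  obtain ⟨q2, hq2, hk2⟩ := (hT.isConnected m' x).exists_path_of_dist
  have hw1 : (p1.append q1).IsPath := by
    apply SimpleGraph.Walk.isPath_of_length_eq_dist
    rw [SimpleGraph.Walk.length_append, hl1, hk1, h2]
  have hw2 : (p2.append q2).IsPath := by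
    apply SimpleGraph.Walk.isPath_of_length_eq_dist
    rw [SimpleGraph.Walk.length_append, hl2, hk2, h3]
  have heq : p1.append q1 = p2.append q2 := (hT.existsUnique_path r x).unique hw1 hw2
  have e1 : (p1.append q1).getVert (T.dist r m) = m := by
    rw [SimpleGraph.Walk.getVert_append]
    simp [hl1, SimpleGraph.Walk.getVert_zero]
  have e2 : (p2.append q2).getVert (T.dist r m) = m' := by
    rw [SimpleGraph.Walk.getVert_append]
    simp [hl2, h1, SimpleGraph.Walk.getVert_zero]
  rw [← e1, heq, e2]

end TreeLemmas

section TreeLemmas2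

variable {B : Type} {T : SimpleGraph B}

lemma tree_min_geodesic_aux (hT : T.IsTree) (r : B) {S : Set B} :
    ∀ {x m : B} (p : T.Walk x m), (∀ s ∈ S, T.dist r m ≤ T.dist r s) → p.IsPath →
      (∀ z ∈ p.support, z ∈ S) → T.dist r x = T.dist r m + T.dist m x := by
  intro x m p
  induction p with
  | nil => intro _ _ _; simp
  | @cons x z m h q ih =>
    intro hminS hp hsupp
    have hq : q.IsPath := ((SimpleGraph.Walk.cons_isPath_iff h q).mp hp).1
    have hqsupp : ∀ w ∈ q.support, w ∈ S := fun w hw =>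
      hsupp w (by rw [SimpleGraph.Walk.support_cons]; exact List.mem_cons_of_mem _ hw)
    have IH := ih hminS hq hqsupp
    have dmz : T.dist m z = q.length := by
      rw [SimpleGraph.dist_comm]; exact (tree_path_length hT q hq).symm
    have dmx : T.dist m x = q.length + 1 := by
      rw [SimpleGraph.dist_comm]
      have := tree_path_length hT (SimpleGraph.Walk.cons h q) hp
      simpa using this.symm
    have hxS : x ∈ S := hsupp x (SimpleGraph.Walk.start_mem_support _)
    have hxmin : T.dist r m ≤ T.dist r x := hminS x hxS
    rcases tree_adj_dist hT r h with hcase | hcase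
    · -- bad case : dist r z = dist r x + 1 : contradiction
      exfalso
      by_cases hd : q.length = 0
      · have hzm : z = m := SimpleGraph.Walk.eq_of_length_eq_zero hd
        rw [hzm] at hcase
        omega
      · have hd1 : 1 ≤ q.length := Nat.one_le_iff_ne_zero.mpr hd
        obtain ⟨pr, hpr, hprl⟩ := (hT.isConnected r x).exists_path_of_dist
        obtain ⟨q1, hq1, hq1l⟩ := (hT.isConnected r m).exists_path_of_dist
        obtain ⟨q2, hq2, hq2l⟩ := (hT.isConnected m z).exists_path_of_dist
        have hdrx : T.dist r x = T.dist r m + q.length - 1 := by omega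
        have hP1 : (pr.append (SimpleGraph.Walk.cons h SimpleGraph.Walk.nil)).IsPath := by
          apply SimpleGraph.Walk.isPath_of_length_eq_dist
          rw [SimpleGraph.Walk.length_append]
          simp only [SimpleGraph.Walk.length_cons, SimpleGraph.Walk.length_nil]
          omega
        have hP2 : (q1.append q2).IsPath := by
          apply SimpleGraph.Walk.isPath_of_length_eq_dist
          rw [SimpleGraph.Walk.length_append]
          omega
        have heq : pr.append (SimpleGraph.Walk.cons h SimpleGraph.Walk.nil) = q1.append q2 :=
          (hT.existsUnique_path r z).unique hP1 hP2
        have e1 : (pr.append (SimpleGraph.Walk.cons h SimpleGraph.Walk.nil)).getVert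
            (T.dist r m + q.length - 1) = x := by
          rw [SimpleGraph.Walk.getVert_append]
          rw [if_neg (by omega)]
          have h0 : T.dist r m + q.length - 1 - pr.length = 0 := by omega
          rw [h0]; simp
        have e2 : (q1.append q2).getVert (T.dist r m + q.length - 1)
            = q2.getVert (q.length - 1) := by
          rw [SimpleGraph.Walk.getVert_append]
          rw [if_neg (by omega)]
          congr 1
          omega
        have hx2 : x = q2.getVert (q.length - 1) := by rw [← e1, heq, e2]
        have hle : T.dist m (q2.getVert (q.length-1)) ≤ q.length - 1 := by
          have h5 := SimpleGraph.dist_le (q2.takeN (q.length-1))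
          rwa [SimpleGraph.Walk.length_takeN q2 (q.length-1) (by omega)] at h5
        rw [← hx2] at hle
        omega
    · -- good case : dist r x = dist r z + 1
      omega

lemma tree_min_geodesic (hT : T.IsTree) (r : B) {S : Set B} (hconn : (T.induce S).Connected)
    {m : B} (hm : m ∈ S) (hmin : ∀ s ∈ S, T.dist r m ≤ T.dist r s) :
    ∀ x ∈ S, T.dist r x = T.dist r m + T.dist m x := by
  classical
  intro x hx
  obtain ⟨w0⟩ := hconn.preconnected ⟨x, hx⟩ ⟨m, hm⟩
  let f := SimpleGraph.Embedding.induce (G := T) S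
  have hinj : Function.Injective ⇑f.toHom := f.injective
  have hpath : (w0.bypass.map f.toHom).IsPath :=
    SimpleGraph.Walk.map_isPath_of_injective hinj w0.bypass_isPath
  have hsupp : ∀ z ∈ (w0.bypass.map f.toHom).support, z ∈ S := by
    intro z hz
    rw [SimpleGraph.Walk.support_map, List.mem_map] at hz
    obtain ⟨⟨w, hw⟩, _, rfl⟩ := hz
    exact hw
  exact tree_min_geodesic_aux hT r (w0.bypass.map f.toHom) hmin hpath hsupp

lemma tree_tops_eq (hT : T.IsTree) (r : B) {Su Sv : Set B}
    (hcu : (T.induce Su).Connected) (hcv : (T.induce Sv).Connected)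
    {mu mv : B} (hmu : mu ∈ Su) (hminu : ∀ s ∈ Su, T.dist r mu ≤ T.dist r s)
    (hmv : mv ∈ Sv) (hminv : ∀ s ∈ Sv, T.dist r mv ≤ T.dist r s)
    (hlev : T.dist r mu = T.dist r mv) {x : B} (hxu : x ∈ Su) (hxv : x ∈ Sv) :
    mu = mv := by
  have h1 := tree_min_geodesic hT r hcu hmu hminu x hxu
  have h2 := tree_min_geodesic hT r hcv hmv hminv x hxv
  exact tree_unique_mid hT r x hlev h1 (by omega)

end TreeLemmas2


section Dirac

variable {V : Type} {G : SimpleGraph V}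

/-- Reachability by a walk avoiding the set `S`. -/
def ARw (G : SimpleGraph V) (S : Set V) (u v : V) : Prop :=
  ∃ w : G.Walk u v, ∀ x ∈ w.support, x ∉ S

namespace ARw

lemma not_mem_left {S : Set V} {u v : V} (h : ARw G S u v) : u ∉ S := by
  obtain ⟨w, hw⟩ := h; exact hw u w.start_mem_support

lemma not_mem_right {S : Set V} {u v : V} (h : ARw G S u v) : v ∉ S := by
  obtain ⟨w, hw⟩ := h; exact hw v w.end_mem_support

lemma refl {S : Set V} {u : V} (h : u ∉ S) : ARw G S u u :=
  ⟨SimpleGraph.Walk.nil, by simpa using h⟩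

lemma symm {S : Set V} {u v : V} (h : ARw G S u v) : ARw G S v u := by
  obtain ⟨w, hw⟩ := h
  exact ⟨w.reverse, by simpa using hw⟩

lemma trans {S : Set V} {u v x : V} (h : ARw G S u v) (h' : ARw G S v x) : ARw G S u x := by
  obtain ⟨w, hw⟩ := h
  obtain ⟨w', hw'⟩ := h'
  refine ⟨w.append w', ?_⟩
  intro z hz
  rcases (SimpleGraph.Walk.mem_support_append_iff w w').mp hz with h1 | h1
  exacts [hw z h1, hw' z h1]

lemma step {S : Set V} {u v z : V} (h : ARw G S u v) (hadj : G.Adj v z) (hz : z ∉ S) :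
    ARw G S u z :=
  h.trans ⟨SimpleGraph.Walk.cons hadj SimpleGraph.Walk.nil, by
    intro t ht
    simp only [SimpleGraph.Walk.support_cons, SimpleGraph.Walk.support_nil,
      List.mem_cons, List.not_mem_nil, or_false] at ht
    rcases ht with rfl | rfl
    · exact h.not_mem_right
    · exact hz⟩

lemma of_mem_support {S : Set V} {u v z : V} (w : G.Walk u v) (hw : ∀ x ∈ w.support, x ∉ S)
    (hz : z ∈ w.support) : ARw G S u z := by
  classical
  exact ⟨w.takeUntil z hz, fun t ht => hw t (w.support_takeUntil_subset hz ht)⟩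

end ARw

/-- Existence of a minimum-length connecting path with interior inside `A`,
which is chord-free. -/
lemma min_path_package {x y : V} (hxy : x ≠ y) (hnadj : ¬ G.Adj x y) {A : Set V}
    (hne : ∃ w : G.Walk x y, ∀ z ∈ w.support, z ≠ x → z ≠ y → z ∈ A) :
    ∃ w : G.Walk x y, w.IsPath ∧ (∀ z ∈ w.support, z ≠ x → z ≠ y → z ∈ A) ∧ 2 ≤ w.length ∧
      (∀ w' : G.Walk x y, (∀ z ∈ w'.support, z ≠ x → z ≠ y → z ∈ A) → w.length ≤ w'.length) := by
  classical
  set P : G.Walk x y → Prop := fun w => ∀ z ∈ w.support, z ≠ x → z ≠ y → z ∈ A with hP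
  have hLne : {l : ℕ | ∃ w : G.Walk x y, P w ∧ w.length = l}.Nonempty := by
    obtain ⟨w, hw⟩ := hne; exact ⟨w.length, w, hw, rfl⟩
  obtain ⟨w, hw, hwl⟩ := Nat.sInf_mem hLne
  have hmin : ∀ w' : G.Walk x y, P w' → w.length ≤ w'.length := by
    intro w' hw'
    rw [hwl]
    exact Nat.sInf_le ⟨w', hw', rfl⟩
  have hwP : w.IsPath := by
    have hbP : P w.bypass := fun z hz => hw z (w.support_bypass_subset hz)
    have := hmin w.bypass hbP
    have heq := w.bypass_eq_self_of_length_le (le_trans this (le_refl _))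
    rw [← heq]; exact w.bypass_isPath
  have hlen2 : 2 ≤ w.length := by
    rcases Nat.lt_or_ge w.length 2 with h | h
    · interval_cases h' : w.length
      · exact absurd (SimpleGraph.Walk.eq_of_length_eq_zero h') hxy
      · exfalso
        have := w.adj_getVert_succ (i := 0) (by omega)
        rw [SimpleGraph.Walk.getVert_zero, (w.getVert_of_length_le (by omega))] at this
        exact hnadj this
    · exact h
  exact ⟨w, hwP, hw, hlen2, hmin⟩

/-- Chord-freeness of a minimum-length connecting path. -/
lemma min_path_chordfree {x y : V} (hnadj : ¬ G.Adj x y) {A : Set V}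
    (w : G.Walk x y)
    (hcond : ∀ z ∈ w.support, z ≠ x → z ≠ y → z ∈ A)
    (hmin : ∀ w' : G.Walk x y, (∀ z ∈ w'.support, z ≠ x → z ≠ y → z ∈ A) → w.length ≤ w'.length) :
    ∀ i j : ℕ, i + 2 ≤ j → j ≤ w.length → ¬ G.Adj (w.getVert i) (w.getVert j) := by
  intro i j hij hj hadj
  by_cases h0 : i = 0 ∧ j = w.length
  · rw [h0.1, h0.2, SimpleGraph.Walk.getVert_zero, SimpleGraph.Walk.getVert_length] at hadj
    exact hnadj hadj
  · -- splice a shorter walk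
    have hdj : (w.drop j) = (w.drop j) := rfl
    set w' : G.Walk x y :=
      (w.takeN i).append (SimpleGraph.Walk.cons hadj (w.drop j)) with hw'
    have hcond' : ∀ z ∈ w'.support, z ≠ x → z ≠ y → z ∈ A := by
      intro z hz
      apply hcond z
      rw [hw', SimpleGraph.Walk.mem_support_append_iff] at hz
      rcases hz with hz | hz
      · exact w.mem_support_takeN i hz
      · rw [SimpleGraph.Walk.support_cons, List.mem_cons] at hz
        rcases hz with hz | hz
        · rw [hz]
          exact SimpleGraph.Walk.mem_support_iff_exists_getVert.mpr ⟨i, rfl, by omega⟩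
        · exact w.mem_support_dropN j hz
    have hlen' : w'.length = i + 1 + (w.length - j) := by
      rw [hw', SimpleGraph.Walk.length_append, SimpleGraph.Walk.length_cons,
        w.length_takeN i (by omega), w.length_dropN j (by omega)]
      omega
    have := hmin w' hcond'
    rw [hlen'] at this
    rcases Nat.lt_or_ge j w.length with hj' | hj'
    · omega
    · have hj'' : j = w.length := le_antisymm hj hj'
      have hi : i ≠ 0 := fun h => h0 ⟨h, hj''⟩
      omega

end Dirac

section NoHole
variable {V : Type} {G : SimpleGraph V}

lemma no_hole' (hchord : Chordal G) {x y : V} (hxy : x ≠ y) (hnadj : ¬ G.Adj x y)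
    (wA wB : G.Walk x y) (hA : wA.IsPath) (hB : wB.IsPath)
    (h2A : 2 ≤ wA.length) (h2B : 2 ≤ wB.length)
    (chordA : ∀ i j : ℕ, i + 2 ≤ j → j ≤ wA.length → ¬ G.Adj (wA.getVert i) (wA.getVert j))
    (chordB : ∀ i j : ℕ, i + 2 ≤ j → j ≤ wB.length → ¬ G.Adj (wB.getVert i) (wB.getVert j))
    (hdisj : ∀ i j : ℕ, 1 ≤ i → i ≤ wA.length - 1 → 1 ≤ j → j ≤ wB.length - 1 →
      wA.getVert i ≠ wB.getVert j ∧ ¬ G.Adj (wA.getVert i) (wB.getVert j)) :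
    False := by
  classical
  set L₁ := wA.length with hL₁
  set L₂ := wB.length with hL₂
  set n := L₁ + L₂ with hn
  set c := wA.append wB.reverse with hc
  have hc_len : c.length = n := by
    rw [hc, SimpleGraph.Walk.length_append, SimpleGraph.Walk.length_reverse]
  have g1 : ∀ i, i ≤ L₁ → c.getVert i = wA.getVert i := by
    intro i hi
    rw [hc, SimpleGraph.Walk.getVert_append]
    rcases Nat.lt_or_ge i L₁ with h | h
    · rw [if_pos h]
    · have hiL : i = L₁ := le_antisymm hi h
      rw [if_neg (by omega)]
      subst hiL
      rw [Nat.sub_self, SimpleGraph.Walk.getVert_zero]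
      rw [hL₁]
      exact (SimpleGraph.Walk.getVert_length wA).symm
  have g2 : ∀ t, t ≤ L₂ → c.getVert (L₁ + t) = wB.getVert (L₂ - t) := by
    intro t ht
    rw [hc, SimpleGraph.Walk.getVert_append, if_neg (by omega)]
    have : L₁ + t - wA.length = t := by omega
    rw [this, SimpleGraph.Walk.getVert_reverse]
  have adj_succ : ∀ i, i < n → G.Adj (c.getVert i) (c.getVert (i+1)) := by
    intro i hi
    exact c.adj_getVert_succ (by omega)
  have gv_n : c.getVert n = c.getVert 0 := by
    rw [SimpleGraph.Walk.getVert_zero, ← hc_len, SimpleGraph.Walk.getVert_length]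
  have H2 : ∀ i j : ℕ, i < j → j < n → j ≠ i+1 → ¬(i = 0 ∧ j = n-1) →
      ¬ G.Adj (c.getVert i) (c.getVert j) ∧ c.getVert i ≠ c.getVert j := by
    intro i j hij hjn hne1 hne2
    by_cases hjL : j ≤ L₁
    · rw [g1 i (by omega), g1 j hjL]
      exact ⟨chordA i j (by omega) hjL, hA.getVert_injective i j hij (by omega)⟩
    · by_cases hiL : L₁ ≤ i
      · have e1 : c.getVert i = wB.getVert (L₂ - (i - L₁)) := by
          have := g2 (i - L₁) (by omega)
          rwa [show L₁ + (i - L₁) = i by omega] at this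
        have e2 : c.getVert j = wB.getVert (L₂ - (j - L₁)) := by
          have := g2 (j - L₁) (by omega)
          rwa [show L₁ + (j - L₁) = j by omega] at this
        rw [e1, e2]
        have h1 : (L₂ - (j - L₁)) + 2 ≤ (L₂ - (i - L₁)) := by omega
        have h2 : (L₂ - (i - L₁)) ≤ L₂ := by omega
        constructor
        · intro h
          exact chordB _ _ h1 h2 h.symm
        · exact fun h => hB.getVert_injective _ _ (by omega) h2 h.symm
      · -- i < L₁ < j
        have hjq : j - L₁ ≥ 1 := by omega
        have hjq2 : j - L₁ ≤ L₂ - 1 := by omega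
        have e2 : c.getVert j = wB.getVert (L₂ - (j - L₁)) := by
          have := g2 (j - L₁) (by omega)
          rwa [show L₁ + (j - L₁) = j by omega] at this
        have hq1 : 1 ≤ L₂ - (j - L₁) := by omega
        have hq2 : L₂ - (j - L₁) ≤ L₂ - 1 := by omega
        by_cases hi0 : i = 0
        · subst hi0
          have e1 : c.getVert 0 = wB.getVert 0 := by
            rw [SimpleGraph.Walk.getVert_zero, SimpleGraph.Walk.getVert_zero]
          have hq3 : 2 ≤ L₂ - (j - L₁) := by omega
          rw [e1, e2]
          exact ⟨chordB 0 _ (by omega) (by omega),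
            hB.getVert_injective 0 _ (by omega) (by omega)⟩
        · rw [g1 i (by omega), e2]
          have hd := hdisj i (L₂ - (j - L₁)) (by omega) (by omega) hq1 hq2
          exact ⟨hd.2, hd.1⟩
  have key : ∀ i j : ℕ, i < j → j < n →
      (G.Adj (c.getVert i) (c.getVert j) ↔ (j = i+1 ∨ (i = 0 ∧ j = n-1))) := by
    intro i j hij hjn
    constructor
    · intro h
      by_contra hcon
      push_neg at hcon
      exact (H2 i j hij hjn hcon.1 (by intro hh; exact hcon.2 hh.1 hh.2)).1 h
    · rintro (rfl | ⟨rfl, rfl⟩)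
      · exact adj_succ i (by omega)
      · have := adj_succ (n-1) (by omega)
        rw [show n - 1 + 1 = n by omega, gv_n] at this
        exact this.symm
  have inj_ne : ∀ i j : ℕ, i < j → j < n → c.getVert i ≠ c.getVert j := by
    intro i j hij hjn
    by_cases h1 : j = i + 1
    · subst h1
      exact G.ne_of_adj (adj_succ i (by omega))
    · by_cases h2 : i = 0 ∧ j = n - 1
      · have := (key i j hij hjn).mpr (Or.inr h2)
        exact G.ne_of_adj this
      · exact (H2 i j hij hjn h1 h2).2
  obtain ⟨m, hm⟩ : ∃ m, n = m + 2 := ⟨n - 2, by omega⟩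
  have h4 : 4 ≤ n := by omega
  set f : Fin (m+2) → V := fun i => c.getVert i.val with hf
  have hinj : Function.Injective f := by
    intro i j h
    by_contra hne
    have hv : i.val ≠ j.val := fun hh => hne (Fin.ext hh)
    rcases Nat.lt_or_ge i.val j.val with hlt | hge
    · exact inj_ne i.val j.val hlt (by omega ) h
    · exact inj_ne j.val i.val (by omega) (by omega) h.symm
  have hiff : ∀ i j : Fin (m+2), G.Adj (f i) (f j) ↔ (SimpleGraph.cycleGraph (m+2)).Adj i j := by
    intro i j
    rw [SimpleGraph.cycleGraph_adj]
    have hfs : ∀ u v : Fin (m+2), (u - v = 1) ↔ u.val = (v.val + 1) % (m+2) := by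
      intro u v
      rw [sub_eq_iff_eq_add, Fin.ext_iff, Fin.add_def, Fin.val_one]
      rw [Nat.add_comm 1 v.val]
    rw [hfs i j, hfs j i]
    have hi2 : i.val < m + 2 := i.isLt
    have hj2 : j.val < m + 2 := j.isLt
    rcases lt_trichotomy i.val j.val with hlt | heq | hgt
    · rw [hf]
      simp only []
      rw [key i.val j.val hlt (by omega)]
      rcases Nat.lt_or_ge (j.val + 1) (m+2) with h' | h'
      · rw [Nat.mod_eq_of_lt h', Nat.mod_eq_of_lt (by omega)]
        omega
      · have : j.val + 1 = m + 2 := by omega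
        rw [this, Nat.mod_self, Nat.mod_eq_of_lt (by omega)]
        omega
    · have : i = j := Fin.ext heq
      subst this
      have : ¬ G.Adj (f i) (f i) := G.irrefl
      rcases Nat.lt_or_ge (i.val + 1) (m+2) with h' | h'
      · rw [Nat.mod_eq_of_lt h']
        constructor
        · intro h; exact absurd h this
        · intro h; omega
      · have h2 : i.val + 1 = m + 2 := by omega
        rw [h2, Nat.mod_self]
        constructor
        · intro h; exact absurd h this
        · intro h; omega
    · rw [hf]
      simp only []
      rw [SimpleGraph.adj_comm]
      rw [key j.val i.val hgt (by omega)]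
      rcases Nat.lt_or_ge (i.val + 1) (m+2) with h' | h'
      · rw [Nat.mod_eq_of_lt h', Nat.mod_eq_of_lt (by omega)]
        omega
      · have : i.val + 1 = m + 2 := by omega
        rw [this, Nat.mod_self, Nat.mod_eq_of_lt (by omega)]
        omega
  have hemb : SimpleGraph.cycleGraph (m+2) ↪g G :=
    ⟨⟨f, hinj⟩, @fun i j => hiff i j⟩
  exact (hchord (m+2) (by omega)).false hemb

end NoHole

section Dirac2

variable {V : Type} {G : SimpleGraph V}

lemma nbr_aux {S : Set V} {s a b : V} (hs : s ∈ S) (ha : a ∉ S)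
    (w : G.Walk a b) (hw : ∀ x ∈ w.support, x ∉ S \ {s})
    (hsep : ¬ ARw G S a b) :
    ∃ u, ARw G S a u ∧ G.Adj u s := by
  classical
  set w' := w.bypass with hw'def
  have hw' : ∀ x ∈ w'.support, x ∉ S \ {s} := fun x hx => hw x (w.support_bypass_subset hx)
  have hs' : s ∈ w'.support := by
    by_contra hs'
    refine hsep ⟨w', fun z hz => ?_⟩
    intro hzS
    have : z ∈ S \ {s} := ⟨hzS, fun h => hs' (h ▸ hz)⟩
    exact hw' z hz this
  obtain ⟨idx, hidx, hidxle⟩ := SimpleGraph.Walk.mem_support_iff_exists_getVert.mp hs'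
  have hidx0 : idx ≠ 0 := by
    intro h
    rw [h, SimpleGraph.Walk.getVert_zero] at hidx
    exact ha (hidx ▸ hs)
  have hp : w'.IsPath := w.bypass_isPath
  refine ⟨w'.getVert (idx - 1), ⟨w'.takeN (idx - 1), ?_⟩, ?_⟩
  · intro z hz
    rw [SimpleGraph.Walk.mem_support_iff_getVert_takeN w' (idx-1) (by omega)] at hz
    obtain ⟨i, hi, rfl⟩ := hz
    intro hzS
    have hne : w'.getVert i ≠ s := by
      intro h
      rw [← hidx] at h
      exact hp.getVert_injective i idx (by omega) hidxle h
    exact hw' _ (SimpleGraph.Walk.mem_support_iff_exists_getVert.mpr ⟨i, rfl, by omega⟩)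
      ⟨hzS, hne⟩
  · have := w'.adj_getVert_succ (i := idx - 1) (by omega)
    have heq : idx - 1 + 1 = idx := by omega
    rw [heq, hidx] at this
    exact this

lemma no_hole (hchord : Chordal G) {x y : V} (hxy : x ≠ y) (hnadj : ¬ G.Adj x y)
    (wA wB : G.Walk x y) (hA : wA.IsPath) (hB : wB.IsPath)
    (h2A : 2 ≤ wA.length) (h2B : 2 ≤ wB.length)
    (chordA : ∀ i j : ℕ, i + 2 ≤ j → j ≤ wA.length → ¬ G.Adj (wA.getVert i) (wA.getVert j))
    (chordB : ∀ i j : ℕ, i + 2 ≤ j → j ≤ wB.length → ¬ G.Adj (wB.getVert i) (wB.getVert j))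
    (hdisj : ∀ i j : ℕ, 1 ≤ i → i ≤ wA.length - 1 → 1 ≤ j → j ≤ wB.length - 1 →
      wA.getVert i ≠ wB.getVert j ∧ ¬ G.Adj (wA.getVert i) (wB.getVert j)) :
    False :=
  no_hole' hchord hxy hnadj wA wB hA hB h2A h2B chordA chordB hdisj

lemma sep_clique (hchord : Chordal G) {S : Set V} {a b : V}
    (ha : a ∉ S) (hb : b ∉ S) (hsep : ¬ ARw G S a b)
    (hmin : ∀ s ∈ S, ∃ w : G.Walk a b, ∀ x ∈ w.support, x ∉ S \ {s}) :
    ∀ x ∈ S, ∀ y ∈ S, x ≠ y → G.Adj x y := by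
  classical
  intro x hx y hy hxy
  by_contra hnadj
  set A := {v | ARw G S a v} with hAdef
  set B := {v | ARw G S b v} with hBdef
  have hsepb : ¬ ARw G S b a := fun h => hsep h.symm
  have hAB : ∀ v, v ∈ A → v ∈ B → False := fun v h1 h2 => hsep (ARw.trans h1 (ARw.symm h2))
  have hBnotS : ∀ v ∈ B, v ∉ S := fun v h => ARw.not_mem_right h
  have hAnotS : ∀ v ∈ A, v ∉ S := fun v h => ARw.not_mem_right h
  have hABadj : ∀ u ∈ A, ∀ v ∈ B, ¬ G.Adj u v := fun u hu v hv hadj =>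
    hAB v (ARw.step hu hadj (hBnotS v hv)) hv
  have hnbrA : ∀ s ∈ S, ∃ u, u ∈ A ∧ G.Adj u s := by
    intro s hs
    obtain ⟨w, hw⟩ := hmin s hs
    obtain ⟨u, hu, hadj⟩ := nbr_aux hs ha w hw hsep
    exact ⟨u, hu, hadj⟩
  have hnbrB : ∀ s ∈ S, ∃ u, u ∈ B ∧ G.Adj u s := by
    intro s hs
    obtain ⟨w, hw⟩ := hmin s hs
    obtain ⟨u, hu, hadj⟩ := nbr_aux hs hb w.reverse (by simpa using hw) hsepb
    exact ⟨u, hu, hadj⟩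
  have hWex : ∀ (C : Set V) (c : V), (∀ v ∈ C, ARw G S c v) → (∀ v, ARw G S c v → v ∈ C) →
      (∃ u, u ∈ C ∧ G.Adj u x) → (∃ u, u ∈ C ∧ G.Adj u y) →
      ∃ w : G.Walk x y, ∀ z ∈ w.support, z ≠ x → z ≠ y → z ∈ C := by
    intro C c hC1 hC2 ⟨u, huC, hux⟩ ⟨u', hu'C, hu'y⟩
    obtain ⟨w1, hw1⟩ := hC1 u huC
    obtain ⟨w2, hw2⟩ := hC1 u' hu'C
    refine ⟨SimpleGraph.Walk.cons hux.symm
      ((w1.reverse.append w2).append (SimpleGraph.Walk.cons hu'y SimpleGraph.Walk.nil)), ?_⟩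
    intro z hz hzx hzy
    rw [SimpleGraph.Walk.support_cons, List.mem_cons] at hz
    rcases hz with rfl | hz
    · exact absurd rfl hzx
    rw [SimpleGraph.Walk.mem_support_append_iff] at hz
    rcases hz with hz | hz
    · rw [SimpleGraph.Walk.mem_support_append_iff] at hz
      rcases hz with hz | hz
      · rw [SimpleGraph.Walk.support_reverse, List.mem_reverse] at hz
        exact hC2 z (ARw.of_mem_support w1 hw1 hz)
      · exact hC2 z (ARw.of_mem_support w2 hw2 hz)
    · rw [SimpleGraph.Walk.support_cons, List.mem_cons] at hz
      rcases hz with rfl | hz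
      · exact hC2 z (hC1 z hu'C)
      · rw [SimpleGraph.Walk.support_nil, List.mem_singleton] at hz
        exact absurd hz hzy
  have hWA := hWex A a (fun v hv => hv) (fun v hv => hv) (hnbrA x hx) (hnbrA y hy)
  have hWB := hWex B b (fun v hv => hv) (fun v hv => hv) (hnbrB x hx) (hnbrB y hy)
  obtain ⟨wA, hwAp, hwAc, hwA2, hwAmin⟩ := min_path_package hxy hnadj hWA
  obtain ⟨wB, hwBp, hwBc, hwB2, hwBmin⟩ := min_path_package hxy hnadj hWB
  have chordA := min_path_chordfree hnadj wA hwAc hwAmin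
  have chordB := min_path_chordfree hnadj wB hwBc hwBmin
  have hintA : ∀ i, 1 ≤ i → i ≤ wA.length - 1 → wA.getVert i ∈ A := by
    intro i h1 h2
    apply hwAc
    · exact SimpleGraph.Walk.mem_support_iff_exists_getVert.mpr ⟨i, rfl, by omega⟩
    · intro h
      have h0 : wA.getVert 0 = wA.getVert i := by rw [SimpleGraph.Walk.getVert_zero, h]
      exact hwAp.getVert_injective 0 i (by omega) (by omega) h0
    · intro h
      have h0 : wA.getVert i = wA.getVert wA.length := by
        rw [SimpleGraph.Walk.getVert_length, h]
      exact hwAp.getVert_injective i wA.length (by omega) (le_refl _) h0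
  have hintB : ∀ i, 1 ≤ i → i ≤ wB.length - 1 → wB.getVert i ∈ B := by
    intro i h1 h2
    apply hwBc
    · exact SimpleGraph.Walk.mem_support_iff_exists_getVert.mpr ⟨i, rfl, by omega⟩
    · intro h
      have h0 : wB.getVert 0 = wB.getVert i := by rw [SimpleGraph.Walk.getVert_zero, h]
      exact hwBp.getVert_injective 0 i (by omega) (by omega) h0
    · intro h
      have h0 : wB.getVert i = wB.getVert wB.length := by
        rw [SimpleGraph.Walk.getVert_length, h]
      exact hwBp.getVert_injective i wB.length (by omega) (le_refl _) h0
  refine no_hole hchord hxy hnadj wA wB hwAp hwBp hwA2 hwB2 chordA chordB ?_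
  intro i j hi hi' hj hj'
  have hiA := hintA i hi hi'
  have hjB := hintB j hj hj'
  exact ⟨fun h => hAB _ (h ▸ hiA) hjB, hABadj _ hiA _ hjB⟩

end Dirac2

/-- `v` is a simplicial vertex. -/
def SimpAux {V : Type} (G : SimpleGraph V) (v : V) : Prop :=
  ∀ ⦃u w : V⦄, G.Adj v u → G.Adj v w → u ≠ w → G.Adj u w

lemma chordal_induce {V : Type} {G : SimpleGraph V} (hc : Chordal G) (s : Set V) :
    Chordal (G.induce s) := by
  intro n hn
  refine ⟨fun e => (hc n hn).false ((SimpleGraph.Embedding.induce s).comp e)⟩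

theorem dirac_aux : ∀ (n : ℕ) (V : Type) [Fintype V] (G : SimpleGraph V),
    Fintype.card V ≤ n → Chordal G →
    (∀ u w : V, u ≠ w → G.Adj u w) ∨
    (∃ x y : V, x ≠ y ∧ ¬G.Adj x y ∧ SimpAux G x ∧ SimpAux G y) := by
  intro n
  induction n using Nat.strong_induction_on with
  | _ n IH =>
    intro V _ G hcard hch
    classical
    by_cases hcomp : ∀ u w : V, u ≠ w → G.Adj u w
    · exact Or.inl hcomp
    right
    push_neg at hcomp
    obtain ⟨a, b, hab, hnadjab⟩ := hcomp
    -- separators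
    have hS0 : a ∉ (↑(Finset.univ \ ({a, b} : Finset V)) : Set V) ∧
        b ∉ (↑(Finset.univ \ ({a, b} : Finset V)) : Set V) ∧
        ¬ ARw G ↑(Finset.univ \ ({a, b} : Finset V)) a b := by
      refine ⟨by simp, by simp, ?_⟩
      rintro ⟨w, hw⟩
      cases w with
      | nil => exact hab rfl
      | @cons _ z _ h p =>
        have hz : z ∈ (SimpleGraph.Walk.cons h p).support := by
          rw [SimpleGraph.Walk.support_cons]
          exact List.mem_cons_of_mem _ p.start_mem_support
        have := hw z hz
        simp only [Finset.coe_sdiff, Finset.coe_univ, Set.mem_diff, Set.mem_univ, true_and,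
          Finset.coe_insert, Finset.coe_singleton, Set.mem_insert_iff, Set.mem_singleton_iff,
          not_not] at this
        rcases this with rfl | rfl
        · exact G.loopless.irrefl _ h
        · exact hnadjab h
    set SepP : Finset V → Prop := fun S =>
      a ∉ (↑S : Set V) ∧ b ∉ (↑S : Set V) ∧ ¬ ARw G ↑S a b with hSepP
    have hne : {c : ℕ | ∃ S : Finset V, SepP S ∧ S.card = c}.Nonempty :=
      ⟨_, Finset.univ \ ({a, b} : Finset V), hS0, rfl⟩
    obtain ⟨S, hSsep, hScard⟩ := Nat.sInf_mem hne
    have hminS : ∀ S' : Finset V, SepP S' → S.card ≤ S'.card := by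
      intro S' hS'
      rw [hScard]
      exact Nat.sInf_le ⟨S', hS', rfl⟩
    obtain ⟨haS, hbS, hsep⟩ := hSsep
    have hmin_e : ∀ s ∈ (↑S : Set V), ∃ w : G.Walk a b,
        ∀ x ∈ w.support, x ∉ (↑S : Set V) \ {s} := by
      intro s hs
      by_contra hno
      push_neg at hno
      have hsep' : SepP (S.erase s) := by
        refine ⟨by simp [haS], by simp [hbS], ?_⟩
        rintro ⟨w, hw⟩
        obtain ⟨z, hzsupp, hzmem⟩ := hno w
        have := hw z hzsupp
        rw [Finset.coe_erase] at this
        exact this hzmem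
      have := hminS _ hsep'
      have hcard' : (S.erase s).card < S.card :=
        Finset.card_erase_lt_of_mem (by exact_mod_cast hs)
      omega
    have hclique := sep_clique hch haS hbS hsep hmin_e
    -- a side / b side simplicial extraction
    have side : ∀ c d : V, c ∉ (↑S : Set V) → d ∉ (↑S : Set V) → ¬ ARw G ↑S c d →
        ∃ p, ARw G ↑S c p ∧ SimpAux G p := by
      intro c d hcS hdS hcd
      set C : Set V := {v | ARw G ↑S c v} with hC
      set U : Set V := C ∪ ↑S with hU
      have hdU : d ∉ U := by
        rintro (hd | hd)
        · exact hcd hd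
        · exact hdS hd
      have hcardU : Fintype.card ↥U < n := by
        have : Fintype.card ↥U < Fintype.card V := by
          apply Fintype.card_lt_of_injective_of_notMem Subtype.val Subtype.val_injective
          intro hmem
          obtain ⟨⟨z, hz⟩, rfl⟩ := hmem
          exact hdU hz
        omega
      have hmemU : ∀ z u : V, z ∈ C → G.Adj z u → u ∈ U := by
        intro z u hz hadj
        by_cases huS : u ∈ (↑S : Set V)
        · exact Or.inr huS
        · exact Or.inl (ARw.step hz hadj huS)
      have hcC : c ∈ C := ARw.refl hcS
      rcases IH (n-1) (by omega) ↥U (G.induce U) (by omega) (chordal_induce hch U) with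
        hcompU | ⟨x', y', hne', hnadj', hsx, hsy⟩
      · refine ⟨c, hcC, ?_⟩
        intro u w hu hw huw
        have huU : u ∈ U := hmemU c u hcC hu
        have hwU : w ∈ U := hmemU c w hcC hw
        have := hcompU ⟨u, huU⟩ ⟨w, hwU⟩ (by simpa using huw)
        exact this
      · -- one of x', y' is in C
        have hone : (↑x' : V) ∈ C ∨ (↑y' : V) ∈ C := by
          by_contra hcon
          push_neg at hcon
          have hx'S : (↑x' : V) ∈ (↑S : Set V) := by
            rcases x'.2 with h | h
            · exact absurd h hcon.1
            · exact h
          have hy'S : (↑y' : V) ∈ (↑S : Set V) := by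
            rcases y'.2 with h | h
            · exact absurd h hcon.2
            · exact h
          have : G.Adj ↑x' ↑y' := hclique _ hx'S _ hy'S (Subtype.coe_injective.ne hne')
          exact hnadj' this
        have hlift : ∀ z' : ↥U, (↑z' : V) ∈ C → SimpAux (G.induce U) z' → SimpAux G ↑z' := by
          intro z' hz'C hsimp
          intro u w hu hw huw
          have huU : u ∈ U := hmemU _ u hz'C hu
          have hwU : w ∈ U := hmemU _ w hz'C hw
          have h1 : (G.induce U).Adj z' ⟨u, huU⟩ := hu
          have h2 : (G.induce U).Adj z' ⟨w, hwU⟩ := hw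
          exact hsimp h1 h2 (by simpa using huw)
        rcases hone with h | h
        · exact ⟨↑x', h, hlift x' h hsx⟩
        · exact ⟨↑y', h, hlift y' h hsy⟩
    obtain ⟨pa, hpaA, hpaS⟩ := side a b haS hbS hsep
    obtain ⟨pb, hpbB, hpbS⟩ := side b a hbS haS (fun h => hsep h.symm)
    have hne2 : pa ≠ pb := by
      rintro rfl
      exact hsep (hpaA.trans hpbB.symm)
    have hnadj2 : ¬ G.Adj pa pb := by
      intro h
      have : ARw G ↑S a pb := hpaA.step h (ARw.not_mem_right hpbB)
      exact hsep (this.trans hpbB.symm)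
    exact ⟨pa, pb, hne2, hnadj2, hpaS, hpbS⟩

lemma chordal_colorable : ∀ (n : ℕ) (V : Type) [Fintype V] (G : SimpleGraph V),
    Fintype.card V ≤ n → Chordal G → ∀ c : ℕ,
    (∀ s : Finset V, G.IsClique ↑s → s.card ≤ c) → G.Colorable c := by
  intro n
  induction n using Nat.strong_induction_on with
  | _ n IH =>
    intro V _ G hcard hch c hcl
    classical
    rcases isEmpty_or_nonempty V with hV | hV
    · exact SimpleGraph.Colorable.of_isEmpty (G := G) c
    -- a simplicial vertex
    have hsimp : ∃ v : V, SimpAux G v := by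
      rcases dirac_aux n V G hcard hch with hcomp | ⟨x, y, _, _, hsx, _⟩
      · obtain ⟨v⟩ := hV
        exact ⟨v, fun u w _ _ huw => hcomp u w huw⟩
      · exact ⟨x, hsx⟩
    obtain ⟨v, hv⟩ := hsimp
    set U : Set V := {w | w ≠ v} with hU
    have hcardU : Fintype.card ↥U < n := by
      have : Fintype.card ↥U < Fintype.card V := by
        apply Fintype.card_lt_of_injective_of_notMem Subtype.val Subtype.val_injective
        rintro ⟨⟨z, hz⟩, rfl⟩
        exact hz rfl
      omega
    have hclU : ∀ s : Finset ↥U, (G.induce U).IsClique ↑s → s.card ≤ c := by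
      intro s hs
      have himg : G.IsClique (↑(s.image (Subtype.val)) : Set V) := by
        intro u hu w hw huw
        simp only [Finset.coe_image, Set.mem_image, Finset.mem_coe] at hu hw
        obtain ⟨u', hu', rfl⟩ := hu
        obtain ⟨w', hw', rfl⟩ := hw
        exact hs hu' hw' (fun h => huw (congrArg Subtype.val h))
      have := hcl _ himg
      rwa [Finset.card_image_of_injective _ Subtype.val_injective] at this
    have hcol' := IH (n-1) (by omega) ↥U (G.induce U) (by omega) (chordal_induce hch U) c hclU
    obtain ⟨C'⟩ := hcol'
    -- the neighbors of v form a clique of size < c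
    set nbrs : Finset V := Finset.univ.filter (fun w => G.Adj v w) with hnbrs
    have hvn : v ∉ nbrs := by simp [hnbrs]
    have hclique : G.IsClique (↑(insert v nbrs) : Set V) := by
      intro p hp q hq hpq
      simp only [Finset.coe_insert, Set.mem_insert_iff, Finset.mem_coe, hnbrs,
        Finset.mem_filter, Finset.mem_univ, true_and] at hp hq
      rcases hp with rfl | hp
      · rcases hq with rfl | hq
        · exact absurd rfl hpq
        · exact hq
      · rcases hq with rfl | hq
        · exact hp.symm
        · exact hv hp hq hpq
    have hcle : nbrs.card + 1 ≤ c := by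
      have := hcl _ hclique
      rwa [Finset.card_insert_of_notMem hvn] at this
    set used : Finset (Fin c) :=
      nbrs.attach.image
        (fun w => C' ⟨w.1, (G.ne_of_adj (Finset.mem_filter.mp w.2).2).symm⟩) with hused
    have husedcard : used.card < c := by
      calc used.card ≤ nbrs.attach.card := Finset.card_image_le
        _ = nbrs.card := Finset.card_attach
        _ < c := by omega
    have : used ≠ Finset.univ := by
      intro h
      rw [h, Finset.card_univ, Fintype.card_fin] at husedcard
      omega
    obtain ⟨col, hcol⟩ : ∃ col : Fin c, col ∉ used := by
      by_contra hcon
      push_neg at hcon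
      exact this (Finset.eq_univ_iff_forall.mpr hcon)
    refine ⟨SimpleGraph.Coloring.mk
      (fun x => if h : x = v then col else C' ⟨x, h⟩) ?_⟩
    intro p q hpq
    by_cases hp : p = v
    · have hq : q ≠ v := fun h => G.ne_of_adj hpq (hp.trans h.symm)
      rw [dif_pos hp, dif_neg hq]
      intro h
      apply hcol
      rw [hused, Finset.mem_image]
      refine ⟨⟨q, ?_⟩, Finset.mem_attach _ _, ?_⟩
      · rw [hnbrs, Finset.mem_filter]
        exact ⟨Finset.mem_univ _, hp ▸ hpq⟩
      · exact h.symm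
    · by_cases hq : q = v
      · rw [dif_neg hp, dif_pos hq]
        intro h
        apply hcol
        rw [hused, Finset.mem_image]
        refine ⟨⟨p, ?_⟩, Finset.mem_attach _ _, ?_⟩
        · rw [hnbrs, Finset.mem_filter]
          exact ⟨Finset.mem_univ _, hq ▸ hpq.symm⟩
        · exact h
      · rw [dif_neg hp, dif_neg hq]
        have hadj : (G.induce U).Adj ⟨p, hp⟩ ⟨q, hq⟩ := hpq
        exact C'.valid hadj


/-- If `G₁, G₂` are chordal graphs on a common vertex set, `G₁` has a
representation tree of radius at most `k`, and `G = G₁ ∩ G₂`, then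
`χ(G) ≤ (k+1)·ω(G)`. -/
theorem stmt_17 {V : Type} [Fintype V] (k : ℕ) (hk : 0 < k)
    (G₁ G₂ : SimpleGraph V) (hc₁ : Chordal G₁) (hc₂ : Chordal G₂)
    (B₁ : Type) [Fintype B₁] (T₁ : SimpleGraph B₁) (β₁ : B₁ → Set V)
    (hrep : IsRepresentation G₁ T₁ β₁) (hrad : RadiusLE T₁ k)
    (G : SimpleGraph V) (hG : G = G₁ ⊓ G₂) :
    G.chromaticNumber ≤ (((k + 1) * G.cliqueNum : ℕ) : ℕ∞) := by
  classical
  subst hG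
  set ω := (G₁ ⊓ G₂).cliqueNum with hω
  suffices hcol : (G₁ ⊓ G₂).Colorable ((k + 1) * ω) by
    exact hcol.chromaticNumber_le
  rcases isEmpty_or_nonempty V with hV | hV
  · exact SimpleGraph.Colorable.of_isEmpty _
  have hT := hrep.isTree
  obtain ⟨r, hr⟩ := hrad
  -- choose tops
  have htops : ∀ v : V, ∃ m ∈ {t | v ∈ β₁ t}, ∀ s ∈ {t | v ∈ β₁ t},
      T₁.dist r m ≤ T₁.dist r s := by
    intro v
    apply Set.exists_min_image {t | v ∈ β₁ t} (fun t => T₁.dist r t) (Set.toFinite _)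
    have := (hrep.support_connected v).nonempty
    obtain ⟨⟨t, ht⟩⟩ := this
    exact ⟨t, ht⟩
  choose top htopmem htopmin using htops
  -- tops equal for adjacent same-level vertices
  have htopeq : ∀ u v : V, G₁.Adj u v →
      T₁.dist r (top u) = T₁.dist r (top v) → top u = top v := by
    intro u v hadj hlev
    obtain ⟨t0, ht0u, ht0v⟩ := (hrep.adj_iff u v (G₁.ne_of_adj hadj)).mp hadj
    exact tree_tops_eq hT r (hrep.support_connected u) (hrep.support_connected v)
      (htopmem u) (htopmin u) (htopmem v) (htopmin v) hlev ht0u ht0v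
  -- same top implies G₁-adjacent
  have hsametop : ∀ u v : V, u ≠ v → top u = top v → G₁.Adj u v := by
    intro u v hne htop
    exact (hrep.adj_iff u v hne).mpr ⟨top u, htopmem u, htop ▸ htopmem v⟩
  -- class colorings
  have hclasscol : ∀ t : B₁, ((G₁ ⊓ G₂).induce {v | top v = t}).Colorable ω := by
    intro t
    have heq : (G₁ ⊓ G₂).induce {v | top v = t} = G₂.induce {v | top v = t} := by
      ext ⟨u, hu⟩ ⟨v, hv⟩
      show (G₁ ⊓ G₂).Adj u v ↔ G₂.Adj u v
      constructor
      · exact fun h => h.2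
      · intro h
        exact ⟨hsametop u v (G₂.ne_of_adj h) (hu.trans hv.symm), h⟩
    rw [heq]
    apply chordal_colorable (Fintype.card ↥{v | top v = t}) _ _ (le_refl _)
      (chordal_induce hc₂ _)
    intro s hs
    have himg : (G₁ ⊓ G₂).IsClique (↑(s.image Subtype.val) : Set V) := by
      intro p hp q hq hpq
      simp only [Finset.coe_image, Set.mem_image, Finset.mem_coe] at hp hq
      obtain ⟨⟨p', hp'⟩, hps, rfl⟩ := hp
      obtain ⟨⟨q', hq'⟩, hqs, rfl⟩ := hq
      have h2 : G₂.Adj p' q' := hs hps hqs (fun h => hpq (congrArg Subtype.val h))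
      exact ⟨hsametop p' q' hpq (hp'.trans hq'.symm), h2⟩
    have := SimpleGraph.IsClique.card_le_cliqueNum (tc := himg)
    rwa [Finset.card_image_of_injective _ Subtype.val_injective] at this
  have CC : ∀ t : B₁, ((G₁ ⊓ G₂).induce {v | top v = t}).Coloring (Fin ω) :=
    fun t => (hclasscol t).some
  -- assemble
  have CFin : (G₁ ⊓ G₂).Coloring (Fin (k+1) × Fin ω) := by
    refine SimpleGraph.Coloring.mk
      (fun v => (⟨T₁.dist r (top v), by have := hr (top v); omega⟩, CC (top v) ⟨v, rfl⟩)) ?_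
    intro u v huv heq
    have h1 := congrArg Prod.fst heq
    have h2 := congrArg Prod.snd heq
    simp only [] at h1 h2
    have hlev : T₁.dist r (top u) = T₁.dist r (top v) := congrArg Fin.val h1
    have htop : top u = top v := htopeq u v huv.1 hlev
    have hadj' : ((G₁ ⊓ G₂).induce {x | top x = top v}).Adj ⟨u, htop⟩ ⟨v, rfl⟩ := huv
    have hne' := (CC (top v)).valid hadj'
    apply hne'
    have hcast : ∀ (t : B₁) (h : top u = t), CC (top u) ⟨u, rfl⟩ = CC t ⟨u, h⟩ := by
      rintro t rfl; rfl
    rw [← hcast (top v) htop]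
    exact h2
  have := CFin.colorable
  rwa [Fintype.card_prod, Fintype.card_fin, Fintype.card_fin] at this
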